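/- Let x_1, x_2, x_3 ∈ ℝ^d (d ≥ 2) with pairwise distances |x_i − x_j| ≥ 2r̊, and let R = r̊ + ṙ with ṙ/r̊ ≤ (2/3)√3 − 1. Then B(x_1, R) ∩ B(x_2, R) ∩ B(x_3, R) = ∅. -/

import Mathlib

open Metric

/-- Depletion shells of three mutually non-overlapping hard spheres have no common
point: if the pairwise distances are at least `2r̊` and `rp/r̊ ≤ (2/3)√3 − 1`, then the
balls of radius `R = r̊ + rp` around the three centres have empty intersection. -/
theorem stmt18 (d : ℕ) (hd : 2 ≤ d) (r rp : ℝ) (hr : 0 < r) (hrp : 0 < rp)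
    (hratio : rp / r ≤ 2 / 3 * Real.sqrt 3 - 1)
    (x₁ x₂ x₃ : EuclideanSpace ℝ (Fin d))
    (h12 : 2 * r ≤ dist x₁ x₂) (h13 : 2 * r ≤ dist x₁ x₃) (h23 : 2 * r ≤ dist x₂ x₃) :
    ball x₁ (r + rp) ∩ ball x₂ (r + rp) ∩ ball x₃ (r + rp) = ∅ := by
  have hs3 : Real.sqrt 3 ^ 2 = 3 := Real.sq_sqrt (by norm_num)
  have hs3' : (0:ℝ) ≤ Real.sqrt 3 := Real.sqrt_nonneg 3
  have hrp' : rp ≤ r * (2 / 3 * Real.sqrt 3 - 1) := by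
    rw [div_le_iff₀ hr] at hratio; linarith [hratio]
  have hR : r + rp ≤ 2 / 3 * Real.sqrt 3 * r := by nlinarith [hrp']
  have hsq := pow_le_pow_left₀ (by positivity : (0:ℝ) ≤ r + rp) hR 2
  have hRsq : (r + rp) ^ 2 ≤ 4 / 3 * r ^ 2 := by nlinarith [hsq, hs3, sq_nonneg r]
  ext y
  simp only [Set.mem_inter_iff, mem_ball, Set.mem_empty_iff_false, iff_false, not_and,
    and_imp]
  intro h1 h2 h3
  set a : EuclideanSpace ℝ (Fin d) := x₁ - y with ha
  set b : EuclideanSpace ℝ (Fin d) := x₂ - y with hb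
  set c : EuclideanSpace ℝ (Fin d) := x₃ - y with hc
  have hna : ‖a‖ < r + rp := by rw [ha, ← dist_eq_norm, dist_comm]; exact h1
  have hnb : ‖b‖ < r + rp := by rw [hb, ← dist_eq_norm, dist_comm]; exact h2
  have hnc : ‖c‖ < r + rp := by rw [hc, ← dist_eq_norm, dist_comm]; exact h3
  have d12 : dist x₁ x₂ = ‖a - b‖ := by
    rw [ha, hb, sub_sub_sub_cancel_right, dist_eq_norm]
  have d13 : dist x₁ x₃ = ‖a - c‖ := by
    rw [ha, hc, sub_sub_sub_cancel_right, dist_eq_norm]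
  have d23 : dist x₂ x₃ = ‖b - c‖ := by
    rw [hb, hc, sub_sub_sub_cancel_right, dist_eq_norm]
  rw [d12] at h12; rw [d13] at h13; rw [d23] at h23
  -- key inequality via ‖a+b+c‖² ≥ 0
  have e1 : ‖a - b‖ ^ 2 = ‖a‖ ^ 2 - 2 * inner ℝ a b + ‖b‖ ^ 2 := norm_sub_sq_real a b
  have e2 : ‖a - c‖ ^ 2 = ‖a‖ ^ 2 - 2 * inner ℝ a c + ‖c‖ ^ 2 := norm_sub_sq_real a c
  have e3 : ‖b - c‖ ^ 2 = ‖b‖ ^ 2 - 2 * inner ℝ b c + ‖c‖ ^ 2 := norm_sub_sq_real b c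
  have e4 : ‖a + b + c‖ ^ 2 = ‖a + b‖ ^ 2 + 2 * inner ℝ (a + b) c + ‖c‖ ^ 2 :=
    norm_add_sq_real (a + b) c
  have e5 : ‖a + b‖ ^ 2 = ‖a‖ ^ 2 + 2 * inner ℝ a b + ‖b‖ ^ 2 := norm_add_sq_real a b
  have e6 : (inner ℝ (a + b) c : ℝ) = inner ℝ a c + inner ℝ b c := inner_add_left a b c
  have h0 : (0:ℝ) ≤ ‖a + b + c‖ ^ 2 := sq_nonneg _
  have key : ‖a - b‖ ^ 2 + ‖a - c‖ ^ 2 + ‖b - c‖ ^ 2 ≤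
      3 * (‖a‖ ^ 2 + ‖b‖ ^ 2 + ‖c‖ ^ 2) := by linarith [h0, e1, e2, e3, e4, e5, e6]
  have hnaa : (0:ℝ) ≤ ‖a‖ := norm_nonneg _
  have hnbb : (0:ℝ) ≤ ‖b‖ := norm_nonneg _
  have hncc : (0:ℝ) ≤ ‖c‖ := norm_nonneg _
  have q12 : 4 * r ^ 2 ≤ ‖a - b‖ ^ 2 := by
    calc 4 * r ^ 2 = (2 * r) ^ 2 := by ring
      _ ≤ ‖a - b‖ ^ 2 := pow_le_pow_left₀ (by linarith) h12 2
  have q13 : 4 * r ^ 2 ≤ ‖a - c‖ ^ 2 := by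
    calc 4 * r ^ 2 = (2 * r) ^ 2 := by ring
      _ ≤ ‖a - c‖ ^ 2 := pow_le_pow_left₀ (by linarith) h13 2
  have q23 : 4 * r ^ 2 ≤ ‖b - c‖ ^ 2 := by
    calc 4 * r ^ 2 = (2 * r) ^ 2 := by ring
      _ ≤ ‖b - c‖ ^ 2 := pow_le_pow_left₀ (by linarith) h23 2
  have p1 : ‖a‖ ^ 2 < (r + rp) ^ 2 := by
    apply pow_lt_pow_left₀ hna hnaa; norm_num
  have p2 : ‖b‖ ^ 2 < (r + rp) ^ 2 := by
    apply pow_lt_pow_left₀ hnb hnbb; norm_num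
  have p3 : ‖c‖ ^ 2 < (r + rp) ^ 2 := by
    apply pow_lt_pow_left₀ hnc hncc; norm_num
  linarith [key, hRsq, q12, q13, q23, p1, p2, p3]
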